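/- Let R be a ring, n ≥ 1 an integer, and 𝒳 a class of left R-modules. If {G_i}_{i∈I} is a family of Gorenstein n-𝒳-injective left R-modules, then the direct product ∏_{i∈I} G_i is a Gorenstein n-𝒳-injective left R-module. -/

import Mathlib

/- Common framework: `n`-presented modules, syzygies, special 𝒳-presented modules,
   Ext/Tor vanishing (Tor via a hand-rolled tensor product over a possibly
   noncommutative ring, since Mathlib's tensor product requires commutativity),
   `n`-𝒳-injective / `n`-𝒳-flat modules, and the Gorenstein versions. -/

universe u
open CategoryTheory LinearMap DirectSum

section Basic

variable (R : Type u) [Ring R]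

/-- `U` is an `n`-presented left `R`-module: there is an exact sequence
`F_n → ⋯ → F_0 → U → 0` with each `F_i` finitely generated free. -/
def IsNPresented : ℕ → ModuleCat.{u} R → Prop
  | 0, U => Module.Finite R U
  | n + 1, U => ∃ (F : ModuleCat.{u} R) (f : F →ₗ[R] U),
      Module.Free R F ∧ Module.Finite R F ∧ Function.Surjective f ∧
      IsNPresented n (ModuleCat.of R (LinearMap.ker f))

/-- `K` is a `j`-th syzygy of `U` computed from finitely generated free modules:
`IsSyzygy 0 U K` iff `K ≅ U`, and a `(j+1)`-st syzygy of `U` is a `j`-th syzygy of the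
kernel of a surjection from a finitely generated free module onto `U`. -/
def IsSyzygy : ℕ → ModuleCat.{u} R → ModuleCat.{u} R → Prop
  | 0, U, K => Nonempty (K ≃ₗ[R] U)
  | j + 1, U, K => ∃ (F : ModuleCat.{u} R) (f : F →ₗ[R] U),
      Module.Free R F ∧ Module.Finite R F ∧ Function.Surjective f ∧
      IsSyzygy j (ModuleCat.of R (LinearMap.ker f)) K

/-- `Ext_R^k(U, M) = 0`. -/
noncomputable def ExtVanishes (k : ℕ) (U M : ModuleCat.{u} R) : Prop :=
  Subsingleton (((Ext ℤ (ModuleCat.{u} R) k).obj (Opposite.op U)).obj M)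

variable (𝒳 : Set (ModuleCat.{u} R)) (n : ℕ)

/-- `K` is a special 𝒳-presented module: `K` is the image `K_{n-1} = Im(F_{n-1} → F_{n-2})`
arising from an `n`-presentation of some `U ∈ 𝒳` (with the convention `K = U` when `n = 1`),
i.e. `K` is an `(n-1)`-st syzygy of some `n`-presented `U ∈ 𝒳`. -/
def IsSpecialPresented (K : ModuleCat.{u} R) : Prop :=
  ∃ U ∈ 𝒳, IsNPresented R n U ∧ IsSyzygy R (n - 1) U K

/-- `M` is an `n`-𝒳-injective left `R`-module: `Ext_R^n(U, M) = 0` for every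
`n`-presented `U ∈ 𝒳`. -/
noncomputable def IsNXInjective (M : ModuleCat.{u} R) : Prop :=
  ∀ U ∈ 𝒳, IsNPresented R n U → ExtVanishes R n U M

/-- Projective dimension at most `m`. -/
def ProjDimLE : ℕ → ModuleCat.{u} R → Prop
  | 0, K => Module.Projective R K
  | m + 1, K => ∃ (P : ModuleCat.{u} R) (f : P →ₗ[R] K),
      Module.Projective R P ∧ Function.Surjective f ∧
      ProjDimLE m (ModuleCat.of R (LinearMap.ker f))

/-- Finite projective dimension. -/
def HasFiniteProjDim (K : ModuleCat.{u} R) : Prop := ∃ m, ProjDimLE R m K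

/-- `R` is left `n`-𝒳-coherent: every `n`-presented module in `𝒳` is `(n+1)`-presented. -/
def IsNXCoherent : Prop := ∀ U ∈ 𝒳, IsNPresented R n U → IsNPresented R (n + 1) U

/-- `M` has `n`-𝒳-injective dimension at most `m`:
`Ext_R^{n+i}(U, M) = 0` for all `i ≥ m + 1` and all `n`-presented `U ∈ 𝒳`. -/
noncomputable def NXInjDimLE (m : ℕ) (M : ModuleCat.{u} R) : Prop :=
  ∀ U ∈ 𝒳, IsNPresented R n U → ∀ i : ℕ, m + 1 ≤ i → ExtVanishes R (n + i) U M

/-- `M` has finite `n`-𝒳-injective dimension. -/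
noncomputable def HasFiniteNXInjDim (M : ModuleCat.{u} R) : Prop := ∃ m, NXInjDimLE R 𝒳 n m M

end Basic

section Tensor

variable (R : Type u) [Ring R]

/-- The defining relations of the tensor product `N ⊗_R U` of a right `R`-module `N`
with a left `R`-module `U`, inside `N ⊗_ℤ U`. -/
def tensorRel (N : Type u) [AddCommGroup N] [Module Rᵐᵒᵖ N]
    (U : Type u) [AddCommGroup U] [Module R U] : Submodule ℤ (TensorProduct ℤ N U) :=
  Submodule.span ℤ {x | ∃ (r : R) (a : N) (v : U),
    x = (MulOpposite.op r • a) ⊗ₜ[ℤ] v - a ⊗ₜ[ℤ] (r • v)}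

/-- The tensor product `N ⊗_R U` of a right `R`-module `N` with a left `R`-module `U`
over a (possibly noncommutative) ring `R`, as an abelian group. -/
abbrev RTensor (N : Type u) [AddCommGroup N] [Module Rᵐᵒᵖ N]
    (U : Type u) [AddCommGroup U] [Module R U] : Type u :=
  TensorProduct ℤ N U ⧸ tensorRel R N U

/-- Functoriality of `RTensor` in both variables. -/
noncomputable def rtmap {N N' : Type u} [AddCommGroup N] [Module Rᵐᵒᵖ N]
    [AddCommGroup N'] [Module Rᵐᵒᵖ N']
    {U U' : Type u} [AddCommGroup U] [Module R U] [AddCommGroup U'] [Module R U']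
    (g : N →ₗ[Rᵐᵒᵖ] N') (f : U →ₗ[R] U') :
    RTensor R N U →ₗ[ℤ] RTensor R N' U' :=
  Submodule.mapQ (tensorRel R N U) (tensorRel R N' U')
    (TensorProduct.map g.toAddMonoidHom.toIntLinearMap f.toAddMonoidHom.toIntLinearMap)
    (by
      rw [tensorRel, Submodule.span_le]
      rintro x ⟨r, a, v, rfl⟩
      refine Submodule.mem_comap.mpr (Submodule.subset_span ⟨r, g a, f v, ?_⟩)
      refine (map_sub _ _ _).trans ?_
      congr 1
      · exact (TensorProduct.map_tmul _ _ _ _).trans (by simp [map_smul])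
      · exact (TensorProduct.map_tmul _ _ _ _).trans (by simp [map_smul]))

/-- A left `R`-module `M` is flat if `- ⊗_R M` preserves injections of right `R`-modules. -/
noncomputable def IsFlatModule (M : ModuleCat.{u} R) : Prop :=
  ∀ (A B : ModuleCat.{u} Rᵐᵒᵖ) (i : A →ₗ[Rᵐᵒᵖ] B), Function.Injective i →
    Function.Injective (rtmap R i (LinearMap.id (M := M)))

/-- A right `R`-module `N` is flat if `N ⊗_R -` preserves injections of left `R`-modules. -/
noncomputable def IsFlatRight (N : ModuleCat.{u} Rᵐᵒᵖ) : Prop :=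
  ∀ (A B : ModuleCat.{u} R) (i : A →ₗ[R] B), Function.Injective i →
    Function.Injective (rtmap R (LinearMap.id (M := N)) i)

/-- Flat dimension of a left `R`-module at most `m`. -/
noncomputable def FlatDimLE : ℕ → ModuleCat.{u} R → Prop
  | 0, K => IsFlatModule R K
  | m + 1, K => ∃ (P : ModuleCat.{u} R) (f : P →ₗ[R] K),
      IsFlatModule R P ∧ Function.Surjective f ∧
      FlatDimLE m (ModuleCat.of R (LinearMap.ker f))

/-- Finite flat dimension. -/
noncomputable def HasFiniteFlatDim (K : ModuleCat.{u} R) : Prop := ∃ m, FlatDimLE R m K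

variable (𝒳 : Set (ModuleCat.{u} R)) (n : ℕ)

/-- `Tor^R_k(N, U) = 0` for a right `R`-module `N` and a left `R`-module `U`, `k ≥ 1`:
by dimension shifting this says that for every `(k-1)`-st syzygy `K` of `U` and every
surjection `f : F → K` with `F` free, the induced map `N ⊗ ker f → N ⊗ F` is injective. -/
noncomputable def TorVanishes (k : ℕ) (N : ModuleCat.{u} Rᵐᵒᵖ) (U : ModuleCat.{u} R) : Prop :=
  ∀ (K : ModuleCat.{u} R), IsSyzygy R (k - 1) U K →
    ∀ (F : ModuleCat.{u} R) (f : F →ₗ[R] K), Module.Free R F → Function.Surjective f →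
      Function.Injective
        (rtmap R (LinearMap.id (M := N)) (LinearMap.ker f).subtype)

/-- `N` is an `n`-𝒳-flat right `R`-module: `Tor^R_n(N, U) = 0` for every
`n`-presented `U ∈ 𝒳`. -/
noncomputable def IsNXFlat (N : ModuleCat.{u} Rᵐᵒᵖ) : Prop :=
  ∀ U ∈ 𝒳, IsNPresented R n U → TorVanishes R n N U

/-- `N` has `n`-𝒳-flat dimension at most `m`:
`Tor^R_{n+i}(N, U) = 0` for all `i ≥ m + 1` and all `n`-presented `U ∈ 𝒳`. -/
noncomputable def NXFlatDimLE (m : ℕ) (N : ModuleCat.{u} Rᵐᵒᵖ) : Prop :=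
  ∀ U ∈ 𝒳, IsNPresented R n U → ∀ i : ℕ, m + 1 ≤ i → TorVanishes R (n + i) N U

/-- `N` has finite `n`-𝒳-flat dimension. -/
noncomputable def HasFiniteNXFlatDim (N : ModuleCat.{u} Rᵐᵒᵖ) : Prop := ∃ m, NXFlatDimLE R 𝒳 n m N

end Tensor

section Pure

variable (R : Type u) [Ring R] (𝒳 : Set (ModuleCat.{u} R)) (n : ℕ)

/-- A short exact sequence `0 → A → B → C → 0` of left `R`-modules (given by `i` and `p`)
is special 𝒳-pure if `0 → Hom(K, A) → Hom(K, B) → Hom(K, C) → 0` is exact for every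
special 𝒳-presented module `K`. -/
def IsSpecialXPure {A B C : Type u} [AddCommGroup A] [Module R A] [AddCommGroup B] [Module R B]
    [AddCommGroup C] [Module R C] (i : A →ₗ[R] B) (p : B →ₗ[R] C) : Prop :=
  ∀ K : ModuleCat.{u} R, IsSpecialPresented R 𝒳 n K →
    Function.Injective (fun g : K →ₗ[R] A => i.comp g) ∧
    Function.Exact (fun g : K →ₗ[R] A => i.comp g) (fun g : K →ₗ[R] B => p.comp g) ∧
    Function.Surjective (fun g : K →ₗ[R] B => p.comp g)

/-- A short exact sequence `0 → A → B → C → 0` of right `R`-modules (given by `i` and `p`)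
is special 𝒳-pure if `0 → A ⊗ K → B ⊗ K → C ⊗ K → 0` is exact for every special
𝒳-presented (left `R`-) module `K`. -/
noncomputable def IsSpecialXPureRight {A B C : Type u}
    [AddCommGroup A] [Module Rᵐᵒᵖ A] [AddCommGroup B] [Module Rᵐᵒᵖ B]
    [AddCommGroup C] [Module Rᵐᵒᵖ C] (i : A →ₗ[Rᵐᵒᵖ] B) (p : B →ₗ[Rᵐᵒᵖ] C) : Prop :=
  ∀ K : ModuleCat.{u} R, IsSpecialPresented R 𝒳 n K →
    Function.Injective (rtmap R i (LinearMap.id (M := K))) ∧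
    Function.Exact (rtmap R i (LinearMap.id (M := K))) (rtmap R p (LinearMap.id (M := K))) ∧
    Function.Surjective (rtmap R p (LinearMap.id (M := K)))

/-- `R` is self left `n`-𝒳-injective. -/
noncomputable def IsSelfNXInjective : Prop := IsNXInjective R 𝒳 n (ModuleCat.of R R)

end Pure

section Gorenstein

variable (R : Type u) [Ring R] (𝒳 : Set (ModuleCat.{u} R)) (n : ℕ)

/-- `G` is a Gorenstein `n`-𝒳-injective left `R`-module: there is an exact complex
`⋯ → A_1 → A_0 → A^0 → A^1 → ⋯` of `n`-𝒳-injective modules with `G = ker(A^0 → A^1)`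
which stays exact under `Hom_R(K, -)` for every special 𝒳-presented `K` of finite
projective dimension. -/
noncomputable def IsGorNXInjective (G : ModuleCat.{u} R) : Prop :=
  ∃ (C : ℤ → ModuleCat.{u} R) (d : ∀ i : ℤ, C i →ₗ[R] C (i - 1)),
    (∀ i, IsNXInjective R 𝒳 n (C i)) ∧
    (∀ i : ℤ, Function.Exact (d i) (d (i - 1))) ∧
    Nonempty (G ≃ₗ[R] LinearMap.ker (d 0)) ∧
    (∀ K : ModuleCat.{u} R, IsSpecialPresented R 𝒳 n K → HasFiniteProjDim R K →
      ∀ i : ℤ, Function.Exact (fun g : K →ₗ[R] C i => (d i).comp g)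
        (fun g : K →ₗ[R] C (i - 1) => (d (i - 1)).comp g))

/-- `G` is a Gorenstein `n`-𝒳-flat right `R`-module: there is an exact complex
`⋯ → F_1 → F_0 → F^0 → F^1 → ⋯` of `n`-𝒳-flat right modules with `G = ker(F^0 → F^1)`
which stays exact under `- ⊗_R K` for every special 𝒳-presented `K` of finite
flat dimension. -/
noncomputable def IsGorNXFlat (G : ModuleCat.{u} Rᵐᵒᵖ) : Prop :=
  ∃ (C : ℤ → ModuleCat.{u} Rᵐᵒᵖ) (d : ∀ i : ℤ, C i →ₗ[Rᵐᵒᵖ] C (i - 1)),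
    (∀ i, IsNXFlat R 𝒳 n (C i)) ∧
    (∀ i : ℤ, Function.Exact (d i) (d (i - 1))) ∧
    Nonempty (G ≃ₗ[Rᵐᵒᵖ] LinearMap.ker (d 0)) ∧
    (∀ K : ModuleCat.{u} R, IsSpecialPresented R 𝒳 n K → HasFiniteFlatDim R K →
      ∀ i : ℤ, Function.Exact (rtmap R (d i) (LinearMap.id (M := K)))
        (rtmap R (d (i - 1)) (LinearMap.id (M := K))))

end Gorenstein

section GorensteinAbsolute

/-- `G` is a Gorenstein injective module over `S`: there is an exact complex of injective
modules with `G = ker(E^0 → E^1)` which stays exact under `Hom(I, -)` for every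
injective module `I`. -/
noncomputable def IsGorensteinInjective (S : Type u) [Ring S] (G : ModuleCat.{u} S) : Prop :=
  ∃ (C : ℤ → ModuleCat.{u} S) (d : ∀ i : ℤ, C i →ₗ[S] C (i - 1)),
    (∀ i, Module.Injective S (C i)) ∧
    (∀ i : ℤ, Function.Exact (d i) (d (i - 1))) ∧
    Nonempty (G ≃ₗ[S] LinearMap.ker (d 0)) ∧
    (∀ I : ModuleCat.{u} S, Module.Injective S I →
      ∀ i : ℤ, Function.Exact (fun g : I →ₗ[S] C i => (d i).comp g)
        (fun g : I →ₗ[S] C (i - 1) => (d (i - 1)).comp g))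

/-- `G` is a Gorenstein projective module over `S`: there is an exact complex of projective
modules with `G = ker(P^0 → P^1)` which stays exact under `Hom(-, Q)` for every
projective module `Q`. -/
def IsGorensteinProjective (S : Type u) [Ring S] (G : ModuleCat.{u} S) : Prop :=
  ∃ (C : ℤ → ModuleCat.{u} S) (d : ∀ i : ℤ, C i →ₗ[S] C (i - 1)),
    (∀ i, Module.Projective S (C i)) ∧
    (∀ i : ℤ, Function.Exact (d i) (d (i - 1))) ∧
    Nonempty (G ≃ₗ[S] LinearMap.ker (d 0)) ∧
    (∀ Q : ModuleCat.{u} S, Module.Projective S Q →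
      ∀ i : ℤ, Function.Exact (fun g : C (i - 1 - 1) →ₗ[S] Q => g.comp (d (i - 1)))
        (fun g : C (i - 1) →ₗ[S] Q => g.comp (d i)))

variable (R : Type u) [Ring R]

/-- `G` is a Gorenstein flat left `R`-module: there is an exact complex of flat left modules
with `G = ker(F^0 → F^1)` which stays exact under `E ⊗_R -` for every injective right
`R`-module `E`. -/
noncomputable def IsGorensteinFlatLeft (G : ModuleCat.{u} R) : Prop :=
  ∃ (C : ℤ → ModuleCat.{u} R) (d : ∀ i : ℤ, C i →ₗ[R] C (i - 1)),
    (∀ i, IsFlatModule R (C i)) ∧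
    (∀ i : ℤ, Function.Exact (d i) (d (i - 1))) ∧
    Nonempty (G ≃ₗ[R] LinearMap.ker (d 0)) ∧
    (∀ E : ModuleCat.{u} Rᵐᵒᵖ, Module.Injective Rᵐᵒᵖ E →
      ∀ i : ℤ, Function.Exact (rtmap R (LinearMap.id (M := E)) (d i))
        (rtmap R (LinearMap.id (M := E)) (d (i - 1))))

/-- `G` is a Gorenstein flat right `R`-module: there is an exact complex of flat right modules
with `G = ker(F^0 → F^1)` which stays exact under `- ⊗_R E` for every injective left
`R`-module `E`. -/
noncomputable def IsGorensteinFlatRight (G : ModuleCat.{u} Rᵐᵒᵖ) : Prop :=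
  ∃ (C : ℤ → ModuleCat.{u} Rᵐᵒᵖ) (d : ∀ i : ℤ, C i →ₗ[Rᵐᵒᵖ] C (i - 1)),
    (∀ i, IsFlatRight R (C i)) ∧
    (∀ i : ℤ, Function.Exact (d i) (d (i - 1))) ∧
    Nonempty (G ≃ₗ[Rᵐᵒᵖ] LinearMap.ker (d 0)) ∧
    (∀ E : ModuleCat.{u} R, Module.Injective R E →
      ∀ i : ℤ, Function.Exact (rtmap R (d i) (LinearMap.id (M := E)))
        (rtmap R (d (i - 1)) (LinearMap.id (M := E))))

end GorensteinAbsolute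

open CategoryTheory Limits in
lemma subsingleton_of_isZero' {S : Type*} [Ring S] {A : ModuleCat S}
    (h : IsZero A) : Subsingleton A := by
  have hid : 𝟙 A = 0 := h.eq_of_src (𝟙 A) 0
  refine ⟨fun a b => ?_⟩
  have hz : ∀ x : A, x = 0 := fun x => by
    calc x = (𝟙 A : A ⟶ A) x := rfl
    _ = (0 : A ⟶ A) x := by rw [hid]
    _ = 0 := rfl
  rw [hz a, hz b]

open CategoryTheory Limits in
lemma extVanishes_pi {R : Type u} [Ring R] (n : ℕ) (U : ModuleCat.{u} R)
    {ι : Type u} (M : ι → ModuleCat.{u} R)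
    (h : ∀ j, ExtVanishes R n U (M j)) :
    ExtVanishes R n U (ModuleCat.of R (∀ j, ↥(M j))) := by
  obtain ⟨P⟩ := HasProjectiveResolution.out (Z := U)
  have key : ∀ (Y : ModuleCat.{u} R), ExtVanishes R n U Y ↔
      ((P.complex.linearYonedaObj ℤ Y).sc n).Exact := by
    intro Y
    have e := P.isoExt (R := ℤ) n Y
    rw [ExtVanishes, ← HomologicalComplex.exactAt_iff,
      HomologicalComplex.exactAt_iff_isZero_homology]
    constructor
    · intro hs
      haveI : Subsingleton (((Ext ℤ (ModuleCat.{u} R) n).obj (Opposite.op U)).obj Y) := hs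
      haveI : Subsingleton ((P.complex.linearYonedaObj ℤ Y).homology n) :=
        (((forget (ModuleCat.{u} ℤ)).mapIso e).toEquiv.symm).subsingleton
      exact ModuleCat.isZero_of_subsingleton _
    · intro hz
      haveI := subsingleton_of_isZero' hz
      exact (((forget (ModuleCat.{u} ℤ)).mapIso e).toEquiv).subsingleton
  rw [key, ShortComplex.moduleCat_exact_iff]
  intro f hf
  set p := (ComplexShape.up ℕ).prev n with hp
  set q := (ComplexShape.up ℕ).next n with hq
  have hf' : (P.complex.linearYonedaObj ℤ (ModuleCat.of R (∀ j, ↥(M j)))).d n q f = 0 := hf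
  have hcomp : ∀ j, ∃ g : (P.complex.X p ⟶ M j),
      (P.complex.linearYonedaObj ℤ (M j)).d p n g = f ≫ ModuleCat.ofHom (LinearMap.proj j) := by
    intro j
    have hK := (key (M j)).mp (h j)
    rw [ShortComplex.moduleCat_exact_iff] at hK
    apply hK
    show (P.complex.linearYonedaObj ℤ (M j)).d n q (f ≫ ModuleCat.ofHom (LinearMap.proj j)) = 0
    simp only [ChainComplex.linearYonedaObj_d] at hf' ⊢
    have hzc : P.complex.d q n ≫ f = 0 := hf'
    show P.complex.d q n ≫ (f ≫ ModuleCat.ofHom (LinearMap.proj j)) = 0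
    exact (Category.assoc (P.complex.d q n) f (ModuleCat.ofHom (LinearMap.proj j))).symm.trans
      (by rw [hzc, Limits.zero_comp])
  choose g hg using hcomp
  refine ⟨ModuleCat.ofHom (LinearMap.pi (fun j => (g j).hom)), ?_⟩
  show (P.complex.linearYonedaObj ℤ (ModuleCat.of R (∀ j, ↥(M j)))).d p n
    (ModuleCat.ofHom (LinearMap.pi (fun j => (g j).hom))) = f
  simp only [ChainComplex.linearYonedaObj_d] at hg ⊢
  show P.complex.d n p ≫ ModuleCat.ofHom (LinearMap.pi (fun j => (g j).hom)) =
    (f : P.complex.X n ⟶ ModuleCat.of R (∀ j, ↥(M j)))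
  apply ModuleCat.hom_ext
  apply LinearMap.ext
  intro x
  funext j
  have hgj : P.complex.d n p ≫ g j =
      (f : P.complex.X n ⟶ ModuleCat.of R (∀ j, ↥(M j))) ≫ ModuleCat.ofHom (LinearMap.proj j) :=
    hg j
  exact congrArg (fun φ => ModuleCat.Hom.hom φ x) hgj

/-- any direct product of Gorenstein `n`-𝒳-injective left `R`-modules is
Gorenstein `n`-𝒳-injective. -/
theorem statement_10 (R : Type u) [Ring R] (𝒳 : Set (ModuleCat.{u} R)) (n : ℕ) (hn : 1 ≤ n)
    (I : Type u) (G : I → ModuleCat.{u} R)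
    (hG : ∀ i, IsGorNXInjective R 𝒳 n (G i)) :
    IsGorNXInjective R 𝒳 n (ModuleCat.of R (∀ i, ↥(G i))) := by
  classical
  choose C d hprops using hG
  have h1 : ∀ i, ∀ k, IsNXInjective R 𝒳 n (C i k) := fun i => (hprops i).1
  have h2 : ∀ i, ∀ k : ℤ, Function.Exact (d i k) (d i (k - 1)) := fun i => (hprops i).2.1
  have h3 : ∀ i, Nonempty ((G i : Type u) ≃ₗ[R] LinearMap.ker (d i 0)) :=
    fun i => (hprops i).2.2.1
  have h4 := fun i => (hprops i).2.2.2
  refine ⟨fun k => ModuleCat.of R (∀ i, ↥(C i k)),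
    fun k => LinearMap.pi (fun i => (d i k).comp (LinearMap.proj i)), ?_, ?_, ?_, ?_⟩
  · intro k U hU hUp
    exact extVanishes_pi n U (fun i => C i k) (fun i => h1 i k U hU hUp)
  · intro k y
    constructor
    · intro hy
      have hy' : ∀ i, d i (k - 1) (y i) = 0 := fun i => congrFun hy i
      have hx : ∀ i, ∃ x, d i k x = y i := fun i => (h2 i k (y i)).mp (hy' i)
      choose x hxx using hx
      exact ⟨x, funext hxx⟩
    · rintro ⟨x, rfl⟩
      funext i
      exact (h2 i k).apply_apply_eq_zero (x i)
  · have e2 : (∀ i, ↥(LinearMap.ker (d i 0))) ≃ₗ[R]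
        LinearMap.ker ((LinearMap.pi (fun i => (d i 0).comp (LinearMap.proj i))) :
          (∀ i, ↥(C i 0)) →ₗ[R] (∀ i, ↥(C i (0 - 1)))) :=
      { toFun := fun x => ⟨fun i => ((x i : ↥(LinearMap.ker (d i 0))) : ↥(C i 0)),
          LinearMap.mem_ker.mpr (funext (fun i => LinearMap.mem_ker.mp (x i).2))⟩
        invFun := fun y => fun i => ⟨y.1 i,
          LinearMap.mem_ker.mpr (congrFun (LinearMap.mem_ker.mp y.2) i)⟩
        map_add' := fun a b => rfl
        map_smul' := fun r a => rfl
        left_inv := fun x => rfl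
        right_inv := fun y => rfl }
    exact ⟨(LinearEquiv.piCongrRight (fun i => (h3 i).some)).trans e2⟩
  · intro K hK hfd k g
    constructor
    · intro hg
      have hgi : ∀ i, (d i (k - 1)).comp ((LinearMap.proj i).comp g) = 0 := by
        intro i
        ext x
        exact congrFun (LinearMap.congr_fun hg x) i
      have hx : ∀ i, ∃ h0 : K →ₗ[R] C i k,
          (d i k).comp h0 = (LinearMap.proj i).comp g :=
        fun i => ((h4 i K hK hfd k) ((LinearMap.proj i).comp g)).mp (hgi i)
      choose hc hhc using hx
      refine ⟨LinearMap.pi hc, ?_⟩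
      ext x
      rename_i i
      exact LinearMap.congr_fun (hhc i) x
    · rintro ⟨g0, rfl⟩
      ext x
      rename_i i
      exact (h2 i k).apply_apply_eq_zero (g0 x i)
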